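/- arXiv:1912.01497 — 2 statements merged into one kernel-verified Lean document; each statement's English description precedes it below -/
import Mathlib

section
/- Let Q be a Hermitian positive definite n×n matrix, x ∈ ℂ^n, and τ ≥ 0. Then log₂ det(I_n + Q^{-1} x x^H) ≤ τ if and only if (2^τ − 1) Q − x x^H is positive semidefinite. -/
open Matrix ComplexOrder

theorem psd_smul {n : ℕ} {M : Matrix (Fin n) (Fin n) ℂ} (hM : M.PosSemidef) {a : ℝ} (ha : 0 ≤ a) :
    ((a : ℂ) • M).PosSemidef := by
  rw [posSemidef_iff_dotProduct_mulVec]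
  constructor
  · unfold Matrix.IsHermitian
    rw [conjTranspose_smul, hM.1.eq]
    simp
  · intro z
    rw [smul_mulVec, dotProduct_smul]
    have := hM.dotProduct_mulVec_nonneg z
    positivity

theorem psd_smul_iff {n : ℕ} {M : Matrix (Fin n) (Fin n) ℂ} {a : ℝ} (ha : 0 < a) :
    ((a : ℂ) • M).PosSemidef ↔ M.PosSemidef := by
  constructor
  · intro h
    have := psd_smul h (a := a⁻¹) (by positivity)
    rwa [smul_smul, ← Complex.ofReal_mul, inv_mul_cancel₀ ha.ne', Complex.ofReal_one, one_smul] at this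
  · exact fun h => psd_smul h ha.le

theorem psd_unit_iff (M : Matrix Unit Unit ℂ) (hH : M.IsHermitian) : M.PosSemidef ↔ 0 ≤ M () () := by
  constructor
  · intro h
    simpa [dotProduct, mulVec] using h.dotProduct_mulVec_nonneg (fun _ => 1)
  · intro h
    refine PosSemidef.of_dotProduct_mulVec_nonneg hH (fun z => ?_)
    simp only [dotProduct, mulVec, Fintype.sum_unique, Pi.star_apply]
    have e : star (z default) * (M default default * z default)
        = M default default * (star (z default) * z default) := by ring
    rw [e]
    exact mul_nonneg h (star_mul_self_nonneg (z _))

theorem key_pos {n : ℕ} (Q : Matrix (Fin n) (Fin n) ℂ) (hQ : Q.PosDef) (x : Fin n → ℂ)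
    {a : ℝ} (ha : 0 < a) :
    ((a : ℂ) • Q - Matrix.vecMulVec x (star x)).PosSemidef ↔ (star x ⬝ᵥ Q⁻¹ *ᵥ x).re ≤ a := by
  haveI := hQ.isUnit.invertible
  set B := replicateCol Unit x with hB
  set D := (a : ℂ) • (1 : Matrix Unit Unit ℂ) with hD'
  have hD : D.PosDef := by
    refine PosDef.of_dotProduct_mulVec_pos ?_ (fun z hz => ?_)
    · unfold Matrix.IsHermitian
      rw [conjTranspose_smul, conjTranspose_one]
      congr 1
      simp [Complex.ext_iff]
    · simp only [hD', smul_mulVec, one_mulVec, dotProduct_smul, smul_eq_mul]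
      have h1 : (0:ℂ) < star z ⬝ᵥ z := by
        rw [lt_iff_le_and_ne]
        refine ⟨dotProduct_star_self_nonneg z, ?_⟩
        symm
        simpa using (dotProduct_star_self_eq_zero (R := ℂ) (v := z)).not.mpr hz
      exact mul_pos (Complex.zero_lt_real.mpr ha) h1
  haveI := hD.isUnit.invertible
  have hDinv : D⁻¹ = ((a : ℂ)⁻¹) • (1 : Matrix Unit Unit ℂ) := by
    apply Matrix.inv_eq_right_inv
    rw [hD', smul_mul_smul_comm, one_mul,
      mul_inv_cancel₀ (by exact_mod_cast ha.ne' : (a:ℂ) ≠ 0), one_smul]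
  have h1 := PosDef.fromBlocks₁₁ B D hQ
  have h2 := PosDef.fromBlocks₂₂ Q B hD
  -- left side equivalence
  have e2 : Q - B * D⁻¹ * Bᴴ = Q - ((a:ℂ))⁻¹ • Matrix.vecMulVec x (star x) := by
    rw [hDinv, hB, conjTranspose_replicateCol, Matrix.mul_smul, Matrix.mul_one, Matrix.smul_mul,
      ← vecMulVec_eq Unit]
  have e3 : (a : ℂ) • (Q - ((a:ℂ))⁻¹ • Matrix.vecMulVec x (star x))
      = (a : ℂ) • Q - Matrix.vecMulVec x (star x) := by
    rw [smul_sub, smul_smul,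
      mul_inv_cancel₀ (by exact_mod_cast ha.ne' : (a:ℂ) ≠ 0), one_smul]
  have hherm : (D - Bᴴ * Q⁻¹ * B).IsHermitian :=
    (hD.1.sub (isHermitian_conjTranspose_mul_mul B hQ.1.inv))
  have hentry : (D - Bᴴ * Q⁻¹ * B) () () = (a : ℂ) - star x ⬝ᵥ Q⁻¹ *ᵥ x := by
    rw [hB, conjTranspose_replicateCol]
    simp [hD', mul_apply, dotProduct, mulVec, Finset.sum_mul, Finset.mul_sum, mul_assoc]
    rw [Finset.sum_comm]
  have hc : (0:ℂ) ≤ star x ⬝ᵥ Q⁻¹ *ᵥ x := hQ.inv.posSemidef.dotProduct_mulVec_nonneg x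
  calc ((a : ℂ) • Q - Matrix.vecMulVec x (star x)).PosSemidef
      ↔ (Q - ((a:ℂ))⁻¹ • Matrix.vecMulVec x (star x)).PosSemidef := by
        rw [← e3, psd_smul_iff ha]
    _ ↔ (D - Bᴴ * Q⁻¹ * B).PosSemidef := by rw [← e2, ← h2, h1]
    _ ↔ 0 ≤ (a : ℂ) - star x ⬝ᵥ Q⁻¹ *ᵥ x := by rw [psd_unit_iff _ hherm, hentry]
    _ ↔ (star x ⬝ᵥ Q⁻¹ *ᵥ x).re ≤ a := by
        rw [Complex.le_def]
        have him : (star x ⬝ᵥ Q⁻¹ *ᵥ x).im = 0 := ((Complex.le_def).mp hc).2.symm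
        simp [him, sub_nonneg]

theorem key_zero {n : ℕ} (Q : Matrix (Fin n) (Fin n) ℂ) (hQ : Q.PosDef) (x : Fin n → ℂ) :
    (((0:ℝ) : ℂ) • Q - Matrix.vecMulVec x (star x)).PosSemidef ↔ (star x ⬝ᵥ Q⁻¹ *ᵥ x).re ≤ 0 := by
  have hc : (0:ℂ) ≤ star x ⬝ᵥ Q⁻¹ *ᵥ x := hQ.inv.posSemidef.dotProduct_mulVec_nonneg x
  constructor
  · intro h
    have h2 := h.dotProduct_mulVec_nonneg x
    have e : star x ⬝ᵥ (((0:ℝ):ℂ) • Q - Matrix.vecMulVec x (star x)) *ᵥ x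
        = -((star x ⬝ᵥ x) * (star x ⬝ᵥ x)) := by
      simp [sub_mulVec, vecMulVec, mulVec, dotProduct, Finset.mul_sum, Finset.sum_mul, mul_assoc,
        mul_comm, mul_left_comm]
    rw [e] at h2
    have hs : star x ⬝ᵥ x = 0 := by
      have hnn : (0:ℂ) ≤ (star x ⬝ᵥ x) * (star x ⬝ᵥ x) :=
        mul_nonneg (dotProduct_star_self_nonneg x) (dotProduct_star_self_nonneg x)
      have : (star x ⬝ᵥ x) * (star x ⬝ᵥ x) = 0 := le_antisymm (neg_nonneg.mp h2) hnn
      exact mul_self_eq_zero.mp this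
    have hx0 : x = 0 := (dotProduct_star_self_eq_zero (R := ℂ)).mp hs
    have hz : Matrix.vecMulVec (0 : Fin n → ℂ) (0 : Fin n → ℂ) = (0 : Matrix (Fin n) (Fin n) ℂ) := by ext i j; simp [vecMulVec]
    simpa [hx0, hz] using Matrix.PosSemidef.zero (n := Fin n) (R := ℂ)
  · intro h
    have hre : 0 ≤ (star x ⬝ᵥ Q⁻¹ *ᵥ x).re := by simpa using (Complex.le_def.mp hc).1
    have him : (star x ⬝ᵥ Q⁻¹ *ᵥ x).im = 0 := by simpa using (Complex.le_def.mp hc).2.symm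
    have hc0 : star x ⬝ᵥ Q⁻¹ *ᵥ x = 0 := by
      apply Complex.ext
      · simpa using le_antisymm h hre
      · simpa using him
    have hx0 : x = 0 := by
      by_contra hx
      have := hQ.inv.dotProduct_mulVec_pos hx
      rw [hc0] at this
      exact lt_irrefl _ this
    have hz : Matrix.vecMulVec (0 : Fin n → ℂ) (0 : Fin n → ℂ) = (0 : Matrix (Fin n) (Fin n) ℂ) := by ext i j; simp [vecMulVec]
    simpa [hx0, hz] using Matrix.PosSemidef.zero (n := Fin n) (R := ℂ)

/-- For Hermitian positive definite `Q`, a vector `x` and `τ ≥ 0`: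
`log₂ det (I + Q⁻¹ x xᴴ) ≤ τ` iff `(2^τ - 1) • Q - x xᴴ` is positive semidefinite. -/
theorem log_det_leakage_iff_psd {n : ℕ} (Q : Matrix (Fin n) (Fin n) ℂ) (hQ : Q.PosDef)
    (x : Fin n → ℂ) (τ : ℝ) (hτ : 0 ≤ τ) :
    Real.logb 2 ((Matrix.det (1 + Q⁻¹ * Matrix.vecMulVec x (star x))).re) ≤ τ ↔
      ((((2 : ℝ) ^ τ - 1 : ℝ) : ℂ) • Q - Matrix.vecMulVec x (star x)).PosSemidef := by
  have hc : (0:ℂ) ≤ star x ⬝ᵥ Q⁻¹ *ᵥ x := hQ.inv.posSemidef.dotProduct_mulVec_nonneg x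
  have hre : 0 ≤ (star x ⬝ᵥ Q⁻¹ *ᵥ x).re := by simpa using (Complex.le_def.mp hc).1
  have hdet : Matrix.det (1 + Q⁻¹ * Matrix.vecMulVec x (star x)) = 1 + star x ⬝ᵥ (Q⁻¹ *ᵥ x) := by
    rw [vecMulVec_eq Unit, ← Matrix.mul_assoc, ← replicateCol_mulVec, det_one_add_replicateCol_mul_replicateRow]
  have hre' : (1 + star x ⬝ᵥ Q⁻¹ *ᵥ x).re = 1 + (star x ⬝ᵥ Q⁻¹ *ᵥ x).re := by simp
  rw [hdet, hre', Real.logb_le_iff_le_rpow (by norm_num) (by linarith)]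
  have h2τ : (1:ℝ) ≤ (2:ℝ) ^ τ := by
    simpa using Real.rpow_le_rpow_of_exponent_le (by norm_num : (1:ℝ) ≤ 2) hτ
  have hkey : ((((2 : ℝ) ^ τ - 1 : ℝ) : ℂ) • Q - Matrix.vecMulVec x (star x)).PosSemidef ↔
      (star x ⬝ᵥ Q⁻¹ *ᵥ x).re ≤ (2:ℝ) ^ τ - 1 := by
    rcases eq_or_lt_of_le (sub_nonneg.mpr h2τ) with h0 | hpos
    · rw [← h0]
      exact key_zero Q hQ x
    · exact key_pos Q hQ x hpos
  rw [hkey]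
  constructor <;> intro <;> linarith
end

section
/- Penalty exactness for rank-constrained problems: Let f be continuous on a compact feasible set F of Hermitian matrices, and define g(V; ρ) = f(V) + (1/(2ρ))(‖V‖_* − ‖V‖₂). Let V* minimize f over {V ∈ F : ‖V‖_* − ‖V‖₂ = 0}, and let V_s minimize g(·; ρ_s) over F with ρ_s → 0. Then every limit point V̄ of {V_s} satisfies ‖V̄‖_* − ‖V̄‖₂ = 0 and f(V̄) ≤ f(V*), hence V̄ is optimal for the rank-constrained problem. -/
open Matrix ComplexOrder
open scoped InnerProductSpace

/-- The nuclear norm of a complex matrix: the sum of its singular values. -/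
noncomputable def nuclearNorm {n : ℕ} (X : Matrix (Fin n) (Fin n) ℂ) : ℝ :=
  ∑ i, Real.sqrt ((Matrix.posSemidef_conjTranspose_mul_self X).1.eigenvalues i)

/-- The spectral norm of a complex matrix: its largest singular value. -/
noncomputable def spectralNorm2 {n : ℕ} (X : Matrix (Fin n) (Fin n) ℂ) : ℝ :=
  ⨆ i, Real.sqrt ((Matrix.posSemidef_conjTranspose_mul_self X).1.eigenvalues i)

namespace PenaltyAux
variable {n : ℕ}

noncomputable def hX (X : Matrix (Fin n) (Fin n) ℂ) : (Xᴴ * X).IsHermitian :=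
  (Matrix.posSemidef_conjTranspose_mul_self X).1

noncomputable def sv (X : Matrix (Fin n) (Fin n) ℂ) (i : Fin n) : ℝ :=
  Real.sqrt ((hX X).eigenvalues i)

noncomputable def ev (X : Matrix (Fin n) (Fin n) ℂ) (i : Fin n) : Fin n → ℂ :=
  (WithLp.equiv 2 _) ((hX X).eigenvectorBasis i)

lemma sv_nonneg (X : Matrix (Fin n) (Fin n) ℂ) (i : Fin n) : 0 ≤ sv X i := Real.sqrt_nonneg _

lemma nuclearNorm_eq (X : Matrix (Fin n) (Fin n) ℂ) : nuclearNorm X = ∑ i, sv X i := rfl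
lemma spectralNorm2_eq (X : Matrix (Fin n) (Fin n) ℂ) : spectralNorm2 X = ⨆ i, sv X i := rfl

lemma dot_mulVec_mulVec (X : Matrix (Fin n) (Fin n) ℂ) (a b : Fin n → ℂ) :
    dotProduct (star (X *ᵥ a)) (X *ᵥ b)
      = dotProduct (star a) ((Xᴴ * X) *ᵥ b) := by
  rw [star_mulVec, ← Matrix.dotProduct_mulVec, mulVec_mulVec]

lemma ev_ortho (X : Matrix (Fin n) (Fin n) ℂ) (i j : Fin n) :
    dotProduct (star ev X i) (ev X j) = if i = j then 1 else 0 :=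
  (dotProduct_comm (star (ev X i)) (ev X j)).trans
    (orthonormal_iff_ite.mp (hX X).eigenvectorBasis.orthonormal i j)

lemma key (X : Matrix (Fin n) (Fin n) ℂ) (i j : Fin n) :
    dotProduct (star (X *ᵥ ev X i)) (X *ᵥ ev X j)
      = if i = j then (((hX X).eigenvalues j : ℝ) : ℂ) else 0 := by
  rw [dot_mulVec_mulVec]
  have h2 : star (ev X i) ⬝ᵥ ((Xᴴ * X) *ᵥ ev X j)
      = (hX X).eigenvalues j • (star (ev X i) ⬝ᵥ ev X j) := by
    have h3 := congrArg (fun w => star (ev X i) ⬝ᵥ w) ((hX X).mulVec_eigenvectorBasis j)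
    simpa [dotProduct_smul, ev] using h3
  rw [h2]
  have h4 : star (ev X i) ⬝ᵥ ev X j = if i = j then (1:ℂ) else 0 := ev_ortho X i j
  rw [h4]
  split <;> simp [Complex.real_smul]


/-- Convert a plain vector into `EuclideanSpace`. -/
noncomputable def sy : (Fin n → ℂ) → EuclideanSpace ℂ (Fin n) := (WithLp.equiv 2 _).symm

lemma inner_sy (a b : Fin n → ℂ) : ⟪sy a, sy b⟫_ℂ = dotProduct (star a) b :=
  dotProduct_comm b (star a)

lemma norm_sy_sq (a : Fin n → ℂ) : ((‖sy a‖ : ℝ) : ℂ)^2 = dotProduct (star a) a := by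
  rw [← inner_sy a a, inner_self_eq_norm_sq_to_K]
  norm_cast

lemma re_dot_le (a b : Fin n → ℂ) :
    (dotProduct (star a) b).re ≤ ‖sy a‖ * ‖sy b‖ := by
  have h1 : (⟪sy a, sy b⟫_ℂ).re ≤ ‖⟪sy a, sy b⟫_ℂ‖ := Complex.re_le_norm _
  have h2 := norm_inner_le_norm (𝕜 := ℂ) (sy a) (sy b)
  rw [inner_sy] at h1
  rw [inner_sy] at h2
  exact h1.trans h2

lemma norm_sy_ev (X : Matrix (Fin n) (Fin n) ℂ) (i : Fin n) : ‖sy (ev X i)‖ = 1 := by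
  have h : sy (ev X i) = (hX X).eigenvectorBasis i := rfl
  rw [h]
  exact (hX X).eigenvectorBasis.orthonormal.1 i

lemma norm_sy_mulVec_ev (X : Matrix (Fin n) (Fin n) ℂ) (i : Fin n) :
    ‖sy (X *ᵥ ev X i)‖ = sv X i := by
  have h := key X i i
  simp only [if_pos rfl] at h
  have h2 : ((‖sy (X *ᵥ ev X i)‖ : ℝ) : ℂ)^2 = (((hX X).eigenvalues i : ℝ) : ℂ) := by
    rw [norm_sy_sq]; exact h
  have h3 : ‖sy (X *ᵥ ev X i)‖^2 = (hX X).eigenvalues i := by exact_mod_cast h2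
  rw [sv, ← h3, Real.sqrt_sq (norm_nonneg _)]

lemma col_ortho (X : Matrix (Fin n) (Fin n) ℂ) (a b : Fin n) :
    (∑ i, ev X i b * (starRingEnd ℂ) (ev X i a)) = if b = a then 1 else 0 := by
  have hU : ((hX X).eigenvectorUnitary : Matrix (Fin n) (Fin n) ℂ) *
      star ((hX X).eigenvectorUnitary : Matrix (Fin n) (Fin n) ℂ) = 1 :=
    (Unitary.mem_iff.mp (hX X).eigenvectorUnitary.2).2
  have h := congrFun (congrFun (congrArg (fun M => M) hU) b) a
  have happ : ∀ p q : Fin n,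
      ((hX X).eigenvectorUnitary : Matrix (Fin n) (Fin n) ℂ) p q = ev X q p := fun p q => rfl
  simp only [Matrix.mul_apply, Matrix.one_apply, Matrix.star_apply, happ, RCLike.star_def] at h
  exact h

lemma trace_formula (X : Matrix (Fin n) (Fin n) ℂ) (M : Matrix (Fin n) (Fin n) ℂ) :
    M.trace = ∑ i, dotProduct (star (ev X i)) (M *ᵥ ev X i) := by
  have step : ∑ i, dotProduct (star (ev X i)) (M *ᵥ ev X i)
      = ∑ a, ∑ b, M a b * (if b = a then 1 else 0) := by
    simp only [dotProduct, Matrix.mulVec, Pi.star_apply, RCLike.star_def,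
      Finset.mul_sum]
    rw [Finset.sum_comm]
    refine Finset.sum_congr rfl fun a _ => ?_
    rw [Finset.sum_comm]
    refine Finset.sum_congr rfl fun b _ => ?_
    rw [← col_ortho X a b, Finset.mul_sum]
    exact Finset.sum_congr rfl fun i _ => by ring
  rw [step]
  simp [Matrix.trace, Matrix.diag]


lemma adjoint_dot (W : Matrix (Fin n) (Fin n) ℂ) (u y : Fin n → ℂ) :
    dotProduct (star u) (Wᴴ *ᵥ y) = dotProduct (star (W *ᵥ u)) y := by
  rw [star_mulVec, ← Matrix.dotProduct_mulVec]

lemma re_trace_le (X W : Matrix (Fin n) (Fin n) ℂ)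
    (hW : ∀ v : Fin n → ℂ, ‖sy (W *ᵥ v)‖ ≤ ‖sy v‖) :
    ((Wᴴ * X).trace).re ≤ nuclearNorm X := by
  rw [trace_formula X (Wᴴ * X), nuclearNorm_eq]
  have hre : ((∑ i, dotProduct (star (ev X i)) ((Wᴴ * X) *ᵥ ev X i)).re)
      = ∑ i, (dotProduct (star (ev X i)) ((Wᴴ * X) *ᵥ ev X i)).re :=
    Complex.re_sum _ _
  rw [hre]
  refine Finset.sum_le_sum fun i _ => ?_
  have h1 : dotProduct (star (ev X i)) ((Wᴴ * X) *ᵥ ev X i)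
      = dotProduct (star (W *ᵥ ev X i)) (X *ᵥ ev X i) := by
    rw [← Matrix.mulVec_mulVec, adjoint_dot]
  rw [h1]
  calc (dotProduct (star (W *ᵥ ev X i)) (X *ᵥ ev X i)).re
      ≤ ‖sy (W *ᵥ ev X i)‖ * ‖sy (X *ᵥ ev X i)‖ := re_dot_le _ _
    _ ≤ 1 * (sv X i) := by
        rw [norm_sy_mulVec_ev]
        apply mul_le_mul_of_nonneg_right _ (sv_nonneg X i)
        calc ‖sy (W *ᵥ ev X i)‖ ≤ ‖sy (ev X i)‖ := hW _
          _ = 1 := norm_sy_ev X i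
    _ = sv X i := one_mul _


noncomputable def wvec (X : Matrix (Fin n) (Fin n) ℂ) (i : Fin n) : Fin n → ℂ :=
  if (hX X).eigenvalues i = 0 then 0 else ((sv X i : ℝ) : ℂ)⁻¹ • (X *ᵥ ev X i)

noncomputable def W0 (X : Matrix (Fin n) (Fin n) ℂ) : Matrix (Fin n) (Fin n) ℂ :=
  Matrix.of fun a b => ∑ i, wvec X i a * (starRingEnd ℂ) (ev X i b)

lemma W0_mulVec (X : Matrix (Fin n) (Fin n) ℂ) (v : Fin n → ℂ) :
    W0 X *ᵥ v = ∑ i, (dotProduct (star (ev X i)) v) • wvec X i := by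
  funext a
  simp only [W0, Matrix.mulVec, dotProduct, Matrix.of_apply, Finset.sum_apply,
    Pi.smul_apply, Pi.star_apply, RCLike.star_def, Finset.sum_mul, smul_eq_mul]
  rw [Finset.sum_comm]
  exact Finset.sum_congr rfl fun i _ => Finset.sum_congr rfl fun b _ => by ring

lemma sv_sq (X : Matrix (Fin n) (Fin n) ℂ) (i : Fin n) :
    sv X i ^ 2 = (hX X).eigenvalues i :=
  Real.sq_sqrt ((Matrix.posSemidef_conjTranspose_mul_self X).eigenvalues_nonneg i)

lemma wdot (X : Matrix (Fin n) (Fin n) ℂ) (i j : Fin n) :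
    dotProduct (star (wvec X i)) (wvec X j)
      = if i = j ∧ (hX X).eigenvalues i ≠ 0 then 1 else 0 := by
  by_cases hi : (hX X).eigenvalues i = 0
  · simp [wvec, hi]
  by_cases hj : (hX X).eigenvalues j = 0
  · have hij : i ≠ j := fun h => hi (h ▸ hj)
    simp [wvec, hj, hij]
  have key' := key X i j
  simp only [wvec, if_neg hi, if_neg hj]
  rw [star_smul, smul_dotProduct, dotProduct_smul, key']
  by_cases hij : i = j
  · subst hij
    rw [if_pos rfl, if_pos (show i = i ∧ (hX X).eigenvalues i ≠ 0 from ⟨rfl, hi⟩)]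
    simp only [star_inv₀, Complex.star_def, Complex.conj_ofReal, smul_eq_mul]
    have hsv : sv X i ≠ 0 := fun h => hi (by rw [← sv_sq, h]; ring)
    rw [← sv_sq X i]
    push_cast
    field_simp
  · simp [if_neg hij, hij]

lemma parseval (X : Matrix (Fin n) (Fin n) ℂ) (v : Fin n → ℂ) :
    ∑ i, ‖dotProduct (star (ev X i)) v‖^2 = ‖sy v‖^2 := by
  have hrepr : ∀ i, (hX X).eigenvectorBasis.repr (sy v) i
      = dotProduct (star (ev X i)) v := by
    intro i
    rw [(hX X).eigenvectorBasis.repr_apply_apply]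
    exact inner_sy (ev X i) v
  have hnorm : ‖(hX X).eigenvectorBasis.repr (sy v)‖ = ‖sy v‖ :=
    LinearIsometryEquiv.norm_map _ _
  have h2 : ‖(hX X).eigenvectorBasis.repr (sy v)‖^2
      = ∑ i, ‖(hX X).eigenvectorBasis.repr (sy v) i‖^2 := by
    rw [EuclideanSpace.norm_eq, Real.sq_sqrt (Finset.sum_nonneg fun i _ => sq_nonneg _)]
  rw [← hnorm, h2]
  exact Finset.sum_congr rfl fun i _ => by rw [hrepr]

lemma sum_dotProduct' (f : Fin n → (Fin n → ℂ)) (v : Fin n → ℂ) :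
    (∑ i, f i) ⬝ᵥ v = ∑ i, f i ⬝ᵥ v := by
  simp only [dotProduct, Finset.sum_apply, Finset.sum_mul]
  exact Finset.sum_comm

lemma dotProduct_sum' (v : Fin n → ℂ) (f : Fin n → (Fin n → ℂ)) :
    v ⬝ᵥ (∑ i, f i) = ∑ i, v ⬝ᵥ f i := by
  simp only [dotProduct, Finset.sum_apply, Finset.mul_sum]
  exact Finset.sum_comm

lemma norm_sy_sq_re (a : Fin n → ℂ) : ‖sy a‖^2 = (dotProduct (star a) a).re := by
  have h := norm_sy_sq a
  rw [← h]
  norm_cast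

lemma W0_contract (X : Matrix (Fin n) (Fin n) ℂ) (v : Fin n → ℂ) :
    ‖sy (W0 X *ᵥ v)‖ ≤ ‖sy v‖ := by
  have hsq : ‖sy (W0 X *ᵥ v)‖^2 ≤ ‖sy v‖^2 := by
    rw [norm_sy_sq_re, W0_mulVec]
    have hdot : dotProduct (star (∑ i, (dotProduct (star (ev X i)) v) • wvec X i))
        (∑ j, (dotProduct (star (ev X j)) v) • wvec X j)
        = ∑ i, ∑ j, (starRingEnd ℂ) (dotProduct (star (ev X i)) v)
            * (dotProduct (star (ev X j)) v)
            * (if i = j ∧ (hX X).eigenvalues i ≠ 0 then 1 else 0) := by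
      rw [star_sum, sum_dotProduct']
      refine Finset.sum_congr rfl fun i _ => ?_
      rw [star_smul, smul_dotProduct, dotProduct_sum', Finset.smul_sum]
      refine Finset.sum_congr rfl fun j _ => ?_
      rw [dotProduct_smul]
      have hw : star (wvec X i) ⬝ᵥ wvec X j
          = if i = j ∧ (hX X).eigenvalues i ≠ 0 then 1 else 0 := wdot X i j
      rw [hw]
      simp [Complex.star_def, mul_assoc]
    rw [hdot, ← parseval X v]
    rw [Complex.re_sum]
    refine Finset.sum_le_sum fun i _ => ?_
    rw [Finset.sum_eq_single i (fun j _ hji => by simp [Ne.symm hji])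
      (fun h => absurd (Finset.mem_univ i) h)]
    by_cases hne : (hX X).eigenvalues i ≠ 0
    · rw [if_pos (show i = i ∧ (hX X).eigenvalues i ≠ 0 from ⟨rfl, hne⟩), mul_one, RCLike.conj_mul]
      simp [← Complex.ofReal_pow]
    · rw [if_neg (by tauto), mul_zero]
      simp [sq_nonneg]
  calc ‖sy (W0 X *ᵥ v)‖ = Real.sqrt (‖sy (W0 X *ᵥ v)‖^2) := (Real.sqrt_sq (norm_nonneg _)).symm
    _ ≤ Real.sqrt (‖sy v‖^2) := Real.sqrt_le_sqrt hsq
    _ = ‖sy v‖ := Real.sqrt_sq (norm_nonneg _)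

lemma W0_trace (X : Matrix (Fin n) (Fin n) ℂ) :
    (((W0 X)ᴴ * X).trace).re = nuclearNorm X := by
  rw [trace_formula X ((W0 X)ᴴ * X), nuclearNorm_eq, Complex.re_sum]
  refine Finset.sum_congr rfl fun i _ => ?_
  have h1 : dotProduct (star (ev X i)) (((W0 X)ᴴ * X) *ᵥ ev X i)
      = dotProduct (star (W0 X *ᵥ ev X i)) (X *ᵥ ev X i) := by
    rw [← Matrix.mulVec_mulVec, adjoint_dot]
  rw [h1, W0_mulVec]
  have h2 : ∑ j, (dotProduct (star (ev X j)) (ev X i)) • wvec X j = wvec X i := by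
    have ho : ∀ j, star (ev X j) ⬝ᵥ ev X i = if j = i then (1:ℂ) else 0 := fun j => ev_ortho X j i
    rw [Finset.sum_eq_single i (fun j _ hji => by rw [ho j, if_neg hji, zero_smul])
      (fun h => absurd (Finset.mem_univ i) h)]
    rw [ho i, if_pos rfl, one_smul]
  rw [h2]
  by_cases hi : (hX X).eigenvalues i = 0
  · simp [wvec, hi, sv, Real.sqrt_eq_zero', hi.le]
  · simp only [wvec, if_neg hi]
    rw [star_smul, smul_dotProduct]
    have hkey : dotProduct (star (X *ᵥ ev X i)) (X *ᵥ ev X i)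
        = (((hX X).eigenvalues i : ℝ) : ℂ) := by
      have := key X i i; simpa using this
    rw [hkey]
    have hsv : sv X i ≠ 0 := fun h => hi (by rw [← sv_sq, h]; ring)
    simp only [star_inv₀, Complex.star_def, Complex.conj_ofReal, smul_eq_mul]
    rw [← sv_sq X i]
    push_cast
    rw [show ((sv X i : ℂ))⁻¹ * (sv X i : ℂ)^2 = (sv X i : ℂ) by
      field_simp]
    simp

lemma nuclear_triangle (X Y : Matrix (Fin n) (Fin n) ℂ) :
    nuclearNorm X ≤ nuclearNorm Y + nuclearNorm (X - Y) := by
  have hdecomp : (W0 X)ᴴ * X = (W0 X)ᴴ * Y + (W0 X)ᴴ * (X - Y) := by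
    rw [← Matrix.mul_add]; congr 1; abel
  calc nuclearNorm X = (((W0 X)ᴴ * X).trace).re := (W0_trace X).symm
    _ = (((W0 X)ᴴ * Y).trace).re + (((W0 X)ᴴ * (X - Y)).trace).re := by
        rw [hdecomp, Matrix.trace_add, Complex.add_re]
    _ ≤ nuclearNorm Y + nuclearNorm (X - Y) :=
        add_le_add (re_trace_le Y (W0 X) (W0_contract X)) (re_trace_le (X - Y) (W0 X) (W0_contract X))


/-- Frobenius-type quantity, continuous in the entries. -/
noncomputable def fro (X : Matrix (Fin n) (Fin n) ℂ) : ℝ :=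
  Real.sqrt (∑ a, ∑ b, ‖X a b‖^2)

lemma sum_eigen (X : Matrix (Fin n) (Fin n) ℂ) :
    ∑ i, (hX X).eigenvalues i = ∑ a, ∑ b, ‖X a b‖^2 := by
  have h1 : (Xᴴ * X).trace = ∑ i, (((hX X).eigenvalues i : ℝ) : ℂ) := by
    rw [trace_formula X (Xᴴ * X)]
    refine Finset.sum_congr rfl fun i _ => ?_
    rw [← dot_mulVec_mulVec]
    have hk := key X i i
    simpa using hk
  have h2 : (Xᴴ * X).trace = ∑ a, ∑ b, ((‖X b a‖^2 : ℝ) : ℂ) := by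
    simp only [Matrix.trace, Matrix.diag, Matrix.mul_apply, Matrix.conjTranspose_apply]
    refine Finset.sum_congr rfl fun a _ => Finset.sum_congr rfl fun b _ => ?_
    rw [show (star (X b a)) = (starRingEnd ℂ) (X b a) from rfl, RCLike.conj_mul]
    norm_cast
  have h4 := congrArg Complex.re (h1.symm.trans h2)
  simp only [Complex.re_sum, Complex.ofReal_re] at h4
  rw [h4]
  exact Finset.sum_comm

lemma sv_le_fro (X : Matrix (Fin n) (Fin n) ℂ) (i : Fin n) : sv X i ≤ fro X := by
  rw [sv, fro]
  apply Real.sqrt_le_sqrt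
  rw [← sum_eigen]
  exact Finset.single_le_sum
    (fun j _ => (Matrix.posSemidef_conjTranspose_mul_self X).eigenvalues_nonneg j)
    (Finset.mem_univ i)

lemma fro_nonneg (X : Matrix (Fin n) (Fin n) ℂ) : 0 ≤ fro X := Real.sqrt_nonneg _

lemma nuclearNorm_le_fro (X : Matrix (Fin n) (Fin n) ℂ) : nuclearNorm X ≤ n * fro X := by
  rw [nuclearNorm_eq]
  calc ∑ i, sv X i ≤ ∑ _i : Fin n, fro X := Finset.sum_le_sum fun i _ => sv_le_fro X i
    _ = n * fro X := by simp [Finset.sum_const, Finset.card_univ, nsmul_eq_mul]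

lemma spectral_nonneg (X : Matrix (Fin n) (Fin n) ℂ) : 0 ≤ spectralNorm2 X :=
  Real.iSup_nonneg fun i => sv_nonneg X i

lemma nuclear_nonneg (X : Matrix (Fin n) (Fin n) ℂ) : 0 ≤ nuclearNorm X :=
  Finset.sum_nonneg fun i _ => sv_nonneg X i

lemma spectral_le_fro (X : Matrix (Fin n) (Fin n) ℂ) : spectralNorm2 X ≤ fro X :=
  Real.iSup_le (fun i => sv_le_fro X i) (fro_nonneg X)

lemma spectral_le_nuclear (X : Matrix (Fin n) (Fin n) ℂ) :
    spectralNorm2 X ≤ nuclearNorm X :=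
  Real.iSup_le (fun i => Finset.single_le_sum (fun j _ => sv_nonneg X j) (Finset.mem_univ i))
    (nuclear_nonneg X)

lemma sv_le_spectral (X : Matrix (Fin n) (Fin n) ℂ) (i : Fin n) : sv X i ≤ spectralNorm2 X :=
  le_ciSup (Set.finite_range (sv X)).bddAbove i

lemma rayleigh (X : Matrix (Fin n) (Fin n) ℂ) (v : Fin n → ℂ) :
    (dotProduct (star (X *ᵥ v)) (X *ᵥ v)).re ≤ (spectralNorm2 X)^2 * ‖sy v‖^2 := by
  rw [dot_mulVec_mulVec]
  set U : Matrix (Fin n) (Fin n) ℂ := ((hX X).eigenvectorUnitary : Matrix (Fin n) (Fin n) ℂ)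
    with hUdef
  have hspec := (hX X).spectral_theorem
  rw [show (RCLike.ofReal : ℝ → ℂ) = Complex.ofReal from rfl] at hspec
  rw [Unitary.conjStarAlgAut_apply] at hspec
  set y : Fin n → ℂ := star U *ᵥ v with hy
  have hUU : U * star U = 1 := (Unitary.mem_iff.mp (hX X).eigenvectorUnitary.2).2
  have hstep : star v ⬝ᵥ ((Xᴴ * X) *ᵥ v)
      = star y ⬝ᵥ ((Matrix.diagonal (Complex.ofReal ∘ (hX X).eigenvalues)) *ᵥ y) := by
    conv_lhs => rw [hspec]
    rw [← Matrix.mulVec_mulVec, ← Matrix.mulVec_mulVec]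
    have had : star v ⬝ᵥ (U *ᵥ ((Matrix.diagonal (Complex.ofReal ∘ (hX X).eigenvalues)) *ᵥ y))
        = star (star U *ᵥ v) ⬝ᵥ ((Matrix.diagonal (Complex.ofReal ∘ (hX X).eigenvalues)) *ᵥ y) := by
      rw [← adjoint_dot (star U)]
      congr 1
      rw [Matrix.star_eq_conjTranspose, Matrix.conjTranspose_conjTranspose]
    rw [had]
  rw [hstep]
  have hyv : ∑ i, ‖y i‖^2 = ‖sy v‖^2 := by
    have h5 : star y ⬝ᵥ y = star v ⬝ᵥ v := by
      rw [hy, dot_mulVec_mulVec (star U) v v, Matrix.star_eq_conjTranspose,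
        Matrix.conjTranspose_conjTranspose, ← Matrix.star_eq_conjTranspose, hUU,
        Matrix.one_mulVec]
    have h6 := congrArg Complex.re h5
    rw [norm_sy_sq_re]
    rw [← h6]
    simp only [dotProduct, Pi.star_apply, Complex.re_sum, RCLike.star_def,
      RCLike.conj_mul]
    refine (Finset.sum_congr rfl fun i _ => ?_).symm
    norm_cast
  have hdiag : star y ⬝ᵥ ((Matrix.diagonal (Complex.ofReal ∘ (hX X).eigenvalues)) *ᵥ y)
      = ∑ i, (((hX X).eigenvalues i : ℝ) : ℂ) * ((starRingEnd ℂ) (y i) * y i) := by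
    refine Finset.sum_congr rfl fun i _ => ?_
    rw [Matrix.mulVec_diagonal]
    simp only [Pi.star_apply, RCLike.star_def, Function.comp_apply]
    ring
  rw [hdiag, Complex.re_sum, ← hyv, Finset.mul_sum]
  refine Finset.sum_le_sum fun i _ => ?_
  rw [RCLike.conj_mul]
  simp only [show (RCLike.ofReal : ℝ → ℂ) = Complex.ofReal from rfl]
  have hre : ((((hX X).eigenvalues i : ℝ) : ℂ) * ((‖y i‖:ℝ):ℂ)^2).re
      = (hX X).eigenvalues i * ‖y i‖^2 := by
    norm_cast
  rw [hre]
  apply mul_le_mul_of_nonneg_right _ (sq_nonneg _)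
  calc (hX X).eigenvalues i = sv X i ^ 2 := (sv_sq X i).symm
    _ ≤ (spectralNorm2 X)^2 :=
        pow_le_pow_left₀ (sv_nonneg X i) (sv_le_spectral X i) 2

lemma mulVec_norm_le (X : Matrix (Fin n) (Fin n) ℂ) (v : Fin n → ℂ) :
    ‖sy (X *ᵥ v)‖ ≤ spectralNorm2 X * ‖sy v‖ := by
  have hsq : ‖sy (X *ᵥ v)‖^2 ≤ (spectralNorm2 X * ‖sy v‖)^2 := by
    rw [norm_sy_sq_re, mul_pow]
    exact rayleigh X v
  calc ‖sy (X *ᵥ v)‖ = Real.sqrt (‖sy (X *ᵥ v)‖^2) := (Real.sqrt_sq (norm_nonneg _)).symm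
    _ ≤ Real.sqrt ((spectralNorm2 X * ‖sy v‖)^2) := Real.sqrt_le_sqrt hsq
    _ = spectralNorm2 X * ‖sy v‖ :=
        Real.sqrt_sq (mul_nonneg (spectral_nonneg X) (norm_nonneg _))

lemma spectral_triangle (X Y : Matrix (Fin n) (Fin n) ℂ) :
    spectralNorm2 X ≤ spectralNorm2 Y + spectralNorm2 (X - Y) := by
  rcases Nat.eq_zero_or_pos n with h0 | hpos
  · have : IsEmpty (Fin n) := by rw [h0]; exact Fin.isEmpty'
    rw [show spectralNorm2 X = 0 from Real.iSup_of_isEmpty _]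
    exact add_nonneg (spectral_nonneg Y) (spectral_nonneg (X - Y))
  · have : Nonempty (Fin n) := ⟨⟨0, hpos⟩⟩
    obtain ⟨i, hi⟩ := exists_eq_ciSup_of_finite (f := sv X)
    have hspec : spectralNorm2 X = sv X i := hi.symm
    rw [hspec, ← norm_sy_mulVec_ev X i]
    have hsum : Y + (X - Y) = X := by abel
    have hsplit : X *ᵥ ev X i = Y *ᵥ ev X i + (X - Y) *ᵥ ev X i := by
      calc X *ᵥ ev X i = (Y + (X - Y)) *ᵥ ev X i := by rw [hsum]
        _ = Y *ᵥ ev X i + (X - Y) *ᵥ ev X i := Matrix.add_mulVec _ _ _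
    have hadd : sy (Y *ᵥ ev X i + (X - Y) *ᵥ ev X i)
        = sy (Y *ᵥ ev X i) + sy ((X - Y) *ᵥ ev X i) := rfl
    calc ‖sy (X *ᵥ ev X i)‖ = ‖sy (Y *ᵥ ev X i) + sy ((X - Y) *ᵥ ev X i)‖ := by
          rw [hsplit, hadd]
      _ ≤ ‖sy (Y *ᵥ ev X i)‖ + ‖sy ((X - Y) *ᵥ ev X i)‖ := norm_add_le _ _
      _ ≤ spectralNorm2 Y * ‖sy (ev X i)‖ + spectralNorm2 (X - Y) * ‖sy (ev X i)‖ :=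
          add_le_add (mulVec_norm_le Y (ev X i)) (mulVec_norm_le (X - Y) (ev X i))
      _ = spectralNorm2 Y + spectralNorm2 (X - Y) := by rw [norm_sy_ev]; ring


lemma fro_continuous : Continuous (fun X : Matrix (Fin n) (Fin n) ℂ => fro X) := by
  apply Real.continuous_sqrt.comp
  refine continuous_finset_sum _ fun a _ => continuous_finset_sum _ fun b _ => ?_
  exact (((continuous_apply b).comp (continuous_apply a)).norm).pow 2

lemma fro_sub_comm (X Y : Matrix (Fin n) (Fin n) ℂ) : fro (X - Y) = fro (Y - X) := by
  unfold fro
  congr 1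
  refine Finset.sum_congr rfl fun a _ => Finset.sum_congr rfl fun b _ => ?_
  rw [Matrix.sub_apply, Matrix.sub_apply, norm_sub_rev]

lemma nuclear_continuous : Continuous (fun X : Matrix (Fin n) (Fin n) ℂ => nuclearNorm X) := by
  rw [continuous_iff_continuousAt]
  intro Y
  have hbound : ∀ X : Matrix (Fin n) (Fin n) ℂ,
      ‖nuclearNorm X - nuclearNorm Y‖ ≤ n * fro (X - Y) := by
    intro X
    have h1 := nuclear_triangle X Y
    have h2 := nuclear_triangle Y X
    have h3 := nuclearNorm_le_fro (X - Y)
    have h4 := nuclearNorm_le_fro (Y - X)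
    have h5 := fro_sub_comm X Y
    have h6 : (n : ℝ) * fro (Y - X) = (n : ℝ) * fro (X - Y) := by rw [h5]
    rw [Real.norm_eq_abs]
    exact abs_le.mpr ⟨by linarith, by linarith⟩
  have htend : Filter.Tendsto (fun X : Matrix (Fin n) (Fin n) ℂ => (n : ℝ) * fro (X - Y))
      (nhds Y) (nhds 0) := by
    have hc : Continuous fun X : Matrix (Fin n) (Fin n) ℂ => (n : ℝ) * fro (X - Y) :=
      continuous_const.mul (fro_continuous.comp (continuous_id.sub continuous_const))
    have h6 := hc.tendsto Y
    simpa [fro] using h6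
  have h0 : Filter.Tendsto (fun X : Matrix (Fin n) (Fin n) ℂ => nuclearNorm X - nuclearNorm Y)
      (nhds Y) (nhds 0) := squeeze_zero_norm hbound htend
  have h7 := h0.add_const (nuclearNorm Y)
  unfold ContinuousAt
  simpa using h7

lemma spectral_continuous : Continuous (fun X : Matrix (Fin n) (Fin n) ℂ => spectralNorm2 X) := by
  rw [continuous_iff_continuousAt]
  intro Y
  have hbound : ∀ X : Matrix (Fin n) (Fin n) ℂ,
      ‖spectralNorm2 X - spectralNorm2 Y‖ ≤ fro (X - Y) := by
    intro X
    have h1 := spectral_triangle X Y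
    have h2 := spectral_triangle Y X
    have h3 := spectral_le_fro (X - Y)
    have h4 := spectral_le_fro (Y - X)
    have h5 := fro_sub_comm X Y
    rw [Real.norm_eq_abs]
    exact abs_le.mpr ⟨by linarith, by linarith⟩
  have htend : Filter.Tendsto (fun X : Matrix (Fin n) (Fin n) ℂ => fro (X - Y))
      (nhds Y) (nhds 0) := by
    have hc : Continuous fun X : Matrix (Fin n) (Fin n) ℂ => fro (X - Y) :=
      fro_continuous.comp (continuous_id.sub continuous_const)
    have h6 := hc.tendsto Y
    simpa [fro] using h6
  have h0 : Filter.Tendsto (fun X : Matrix (Fin n) (Fin n) ℂ => spectralNorm2 X - spectralNorm2 Y)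
      (nhds Y) (nhds 0) := squeeze_zero_norm hbound htend
  have h7 := h0.add_const (spectralNorm2 Y)
  unfold ContinuousAt
  simpa using h7

end PenaltyAux

/-- Penalty exactness: if `V_s` minimizes `f(V) + (1/(2ρ_s))(‖V‖_* - ‖V‖₂)` over a
compact feasible set `F` with penalty parameters `ρ_s → 0`, and `V*` is optimal for the
rank-constrained problem, then every limit point `V̄` of `(V_s)` satisfies
`‖V̄‖_* - ‖V̄‖₂ = 0` and `f V̄ ≤ f V*`. -/
theorem penalty_exactness {n : ℕ} (F : Set (Matrix (Fin n) (Fin n) ℂ)) (hF : IsCompact F)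
    (f : Matrix (Fin n) (Fin n) ℂ → ℝ) (hf : ContinuousOn f F)
    (Vstar : Matrix (Fin n) (Fin n) ℂ) (hVstarF : Vstar ∈ F)
    (hVstarFeas : nuclearNorm Vstar - spectralNorm2 Vstar = 0)
    (hVstarOpt : ∀ V ∈ F, nuclearNorm V - spectralNorm2 V = 0 → f Vstar ≤ f V)
    (ρ : ℕ → ℝ) (hρpos : ∀ s, 0 < ρ s) (hρ : Filter.Tendsto ρ Filter.atTop (nhds 0))
    (Vs : ℕ → Matrix (Fin n) (Fin n) ℂ) (hVsF : ∀ s, Vs s ∈ F)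
    (hVsOpt : ∀ s, ∀ V ∈ F,
      f (Vs s) + (1 / (2 * ρ s)) * (nuclearNorm (Vs s) - spectralNorm2 (Vs s)) ≤
        f V + (1 / (2 * ρ s)) * (nuclearNorm V - spectralNorm2 V))
    (Vbar : Matrix (Fin n) (Fin n) ℂ) (hVbar : MapClusterPt Vbar Filter.atTop Vs) :
    nuclearNorm Vbar - spectralNorm2 Vbar = 0 ∧ f Vbar ≤ f Vstar := by
  classical
  set p : Matrix (Fin n) (Fin n) ℂ → ℝ := fun V => nuclearNorm V - spectralNorm2 V with hp
  have hpnonneg : ∀ V, 0 ≤ p V := fun V => sub_nonneg.mpr (PenaltyAux.spectral_le_nuclear V)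
  have hpcont : Continuous p := PenaltyAux.nuclear_continuous.sub PenaltyAux.spectral_continuous
  obtain ⟨x0, hx0F, hx0min⟩ := hF.exists_isMinOn ⟨Vstar, hVstarF⟩ hf
  have hkey : ∀ s, f (Vs s) + (1 / (2 * ρ s)) * p (Vs s) ≤ f Vstar := by
    intro s
    have h1 := hVsOpt s Vstar hVstarF
    rw [hVstarFeas, mul_zero, add_zero] at h1
    exact h1
  have hcpos : ∀ s, 0 < 1 / (2 * ρ s) := fun s => by
    have := hρpos s; positivity
  have hfle : ∀ s, f (Vs s) ≤ f Vstar := by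
    intro s
    have h1 := hkey s
    nlinarith [mul_nonneg (hcpos s).le (hpnonneg (Vs s))]
  have hple : ∀ s, p (Vs s) ≤ 2 * ρ s * (f Vstar - f x0) := by
    intro s
    have h1 := hkey s
    have h2 : f x0 ≤ f (Vs s) := hx0min (hVsF s)
    have h3 : (0:ℝ) < 2 * ρ s := by have := hρpos s; positivity
    have h4 : (1 / (2 * ρ s)) * p (Vs s) ≤ f Vstar - f x0 := by linarith
    calc p (Vs s) = (2 * ρ s) * ((1 / (2 * ρ s)) * p (Vs s)) := by
          field_simp
          rw [mul_div_assoc, div_self (hρpos s).ne', mul_one]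
      _ ≤ (2 * ρ s) * (f Vstar - f x0) := mul_le_mul_of_nonneg_left h4 h3.le
  have hptend : Filter.Tendsto (fun s => p (Vs s)) Filter.atTop (nhds 0) := by
    have hub : Filter.Tendsto (fun s => 2 * ρ s * (f Vstar - f x0)) Filter.atTop (nhds 0) := by
      have h6 := (hρ.const_mul (2:ℝ)).mul_const (f Vstar - f x0)
      simpa using h6
    exact tendsto_of_tendsto_of_tendsto_of_le_of_le tendsto_const_nhds hub
      (fun s => hpnonneg _) hple
  have hG : (nhds Vbar ⊓ Filter.map Vs Filter.atTop).NeBot := hVbar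
  set G := nhds Vbar ⊓ Filter.map Vs Filter.atTop with hGdef
  haveI : G.NeBot := hG
  have hG1 : G ≤ nhds Vbar := inf_le_left
  have hG2 : G ≤ Filter.map Vs Filter.atTop := inf_le_right
  have hGF : G ≤ Filter.principal F := by
    refine hG2.trans ?_
    rw [Filter.le_principal_iff, Filter.mem_map]
    exact Filter.Eventually.of_forall hVsF
  have hVbarF : Vbar ∈ F := by
    rw [← hF.isClosed.closure_eq]
    exact mem_closure_iff_clusterPt.mpr (Filter.NeBot.mono hG (le_inf hG1 hGF))
  have htp : Filter.Tendsto p G (nhds (p Vbar)) := (hpcont.tendsto Vbar).mono_left hG1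
  have htp0 : Filter.Tendsto p G (nhds 0) := by
    refine Filter.Tendsto.mono_left ?_ hG2
    rw [Filter.tendsto_map'_iff]
    exact hptend
  have hp0 : p Vbar = 0 := tendsto_nhds_unique htp htp0
  have hGwithin : G ≤ nhdsWithin Vbar F := le_inf hG1 hGF
  have htf : Filter.Tendsto f G (nhds (f Vbar)) := (hf Vbar hVbarF).mono_left hGwithin
  have hev : ∀ᶠ x in G, f x ≤ f Vstar := by
    apply hG2
    rw [Filter.mem_map]
    exact Filter.Eventually.of_forall hfle
  exact ⟨hp0, le_of_tendsto htf hev⟩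
end
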